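/- Let ω ∈ (0,1), let s ≥ 1, let a_1,…,a_s and b_1,…,b_s be reals with a_j ≥ a_* > 0 and b_j ≥ b_* > 0, and let η ∈ (0,1). Then for every natural number n ≥ 1 there exists a finite subset S ⊆ ℤ^s with |S| ≤ n such that ∑_{h ∈ ℤ^s ∖ S} ω_h ≤ (η/(1−η)) · n^{−(1−η)/η} · ∏_{j=1}^s (1 + 2 D_η ω^{η a_j})^{1/η}, where D_η := ∑_{h=1}^∞ ω^{η a_*(h^{b_*}−1)}. -/

import Mathlib

set_option maxHeartbeats 1000000

open Real Finset

open Real Finset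

/-- Mean value step: `(p-1)(x+1)^(-p) ≤ x^(1-p) - (x+1)^(1-p)` for `x ≥ 1 < p`. -/
lemma stmt18_step {p : ℝ} (hp : 1 < p) {x : ℝ} (hx : 1 ≤ x) :
    (p - 1) * (x + 1) ^ (-p) ≤ x ^ (1 - p) - (x + 1) ^ (1 - p) := by
  have hx0 : (0:ℝ) < x := lt_of_lt_of_le one_pos hx
  have hlt : x < x + 1 := lt_add_one x
  obtain ⟨c, hc, hceq⟩ := exists_hasDerivAt_eq_slope (fun y => y ^ (1 - p))
      (fun y => (1 - p) * y ^ (-p)) hlt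
      (fun y hy => by
        have : y ≠ 0 := ne_of_gt (lt_of_lt_of_le hx0 hy.1)
        exact ((Real.hasDerivAt_rpow_const (Or.inl this)).continuousAt).continuousWithinAt)
      (fun y hy => by
        have h := Real.hasDerivAt_rpow_const (p := 1 - p)
          (Or.inl (ne_of_gt (lt_trans hx0 hy.1)))
        simpa [sub_sub, show (1:ℝ) - p - 1 = -p by ring] using h)
  have hc0 : 0 < c := lt_trans hx0 hc.1
  have hcx : c ≤ x + 1 := le_of_lt hc.2
  have hmono : (x + 1) ^ (-p) ≤ c ^ (-p) :=
    Real.rpow_le_rpow_of_nonpos hc0 hcx (by linarith)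
  have hslope : (1 - p) * c ^ (-p) = (x + 1) ^ (1 - p) - x ^ (1 - p) := by
    have := hceq
    simpa using this
  nlinarith [Real.rpow_nonneg (le_of_lt hc0) (-p),
    Real.rpow_nonneg (by linarith : (0:ℝ) ≤ x + 1) (-p)]

/-- tail bound for p-series. -/
lemma stmt18_tail {p : ℝ} (hp : 1 < p) (n : ℕ) (hn : 1 ≤ n) :
    Summable (fun j : ℕ => ((n : ℝ) + j + 1) ^ (-p)) ∧
    ∑' j : ℕ, ((n : ℝ) + j + 1) ^ (-p) ≤ (n : ℝ) ^ (1 - p) / (p - 1) := by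
  have hn1 : (1:ℝ) ≤ n := by exact_mod_cast hn
  have hp1 : (0:ℝ) < p - 1 := by linarith
  have key : ∀ N : ℕ, ∑ j ∈ Finset.range N, ((n : ℝ) + j + 1) ^ (-p)
      ≤ ((n : ℝ) ^ (1 - p) - ((n : ℝ) + N) ^ (1 - p)) / (p - 1) := by
    intro N
    induction N with
    | zero => simp
    | succ N ih =>
      rw [Finset.sum_range_succ]
      have hx : (1:ℝ) ≤ (n : ℝ) + N := by
        have : (0:ℝ) ≤ (N:ℝ) := Nat.cast_nonneg N
        linarith
      have hstep := stmt18_step hp hx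
      have : ((n : ℝ) + N + 1) ^ (-p)
          ≤ (((n : ℝ) + N) ^ (1 - p) - ((n : ℝ) + N + 1) ^ (1 - p)) / (p - 1) := by
        rw [le_div_iff₀ hp1]
        linarith
      have hcast : ((n : ℝ) + (N + 1 : ℕ)) = (n : ℝ) + N + 1 := by push_cast; ring
      rw [hcast]
      calc ∑ j ∈ Finset.range N, ((n : ℝ) + j + 1) ^ (-p) + ((n : ℝ) + N + 1) ^ (-p)
          ≤ ((n : ℝ) ^ (1 - p) - ((n : ℝ) + N) ^ (1 - p)) / (p - 1)
            + (((n : ℝ) + N) ^ (1 - p) - ((n : ℝ) + N + 1) ^ (1 - p)) / (p - 1) :=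
            add_le_add ih this
        _ = ((n : ℝ) ^ (1 - p) - ((n : ℝ) + N + 1) ^ (1 - p)) / (p - 1) := by ring
  have key' : ∀ N : ℕ, ∑ j ∈ Finset.range N, ((n : ℝ) + j + 1) ^ (-p)
      ≤ (n : ℝ) ^ (1 - p) / (p - 1) := by
    intro N
    refine (key N).trans ?_
    have : (0:ℝ) ≤ ((n : ℝ) + N) ^ (1 - p) :=
      Real.rpow_nonneg (by positivity) _
    have h2 : (n : ℝ) ^ (1 - p) - ((n : ℝ) + N) ^ (1 - p) ≤ (n : ℝ) ^ (1 - p) := by linarith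
    gcongr
  have hnn : ∀ j : ℕ, 0 ≤ ((n : ℝ) + j + 1) ^ (-p) := fun j =>
    Real.rpow_nonneg (by positivity) _
  exact ⟨summable_of_sum_range_le hnn key', Real.tsum_le_of_sum_range_le hnn key'⟩

open Finset

/-- Greedy enumeration: a bijection `g : ℕ → ι` along which `f` is decreasing. -/
lemma stmt18_greedy {ι : Type*} [Infinite ι] (f : ι → ℝ) (hpos : ∀ h, 0 < f h)
    (hfin : ∀ t : ℝ, 0 < t → {h : ι | t ≤ f h}.Finite) :
    ∃ g : ℕ → ι, Function.Bijective g ∧ ∀ k l : ℕ, k ≤ l → f (g l) ≤ f (g k) := by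
  classical
  have hstep : ∀ F : Finset ι, ∃ m, m ∉ F ∧ ∀ h, h ∉ F → f h ≤ f m := by
    intro F
    obtain ⟨h0, hh0⟩ := Infinite.exists_notMem_finset F
    set G := (hfin (f h0) (hpos h0)).toFinset with hG
    have hh0G : h0 ∈ G := by simp [hG]
    have hne : (G \ F).Nonempty := ⟨h0, Finset.mem_sdiff.2 ⟨hh0G, hh0⟩⟩
    obtain ⟨m, hmG, hmax⟩ := Finset.exists_max_image (G \ F) f hne
    refine ⟨m, (Finset.mem_sdiff.1 hmG).2, fun h hh => ?_⟩
    rcases le_total (f h) (f h0) with h1 | h1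
    · exact h1.trans (hmax h0 (Finset.mem_sdiff.2 ⟨hh0G, hh0⟩))
    · exact hmax h (Finset.mem_sdiff.2 ⟨by simp [hG, h1], hh⟩)
  choose next hnext1 hnext2 using hstep
  let F : ℕ → Finset ι := fun k => Nat.rec (∅ : Finset ι) (fun _ Fk => insert (next Fk) Fk) k
  have hF0 : F 0 = ∅ := rfl
  have hFsucc : ∀ k, F (k + 1) = insert (next (F k)) (F k) := fun k => rfl
  set g : ℕ → ι := fun k => next (F k) with hg
  have hgnot : ∀ k, g k ∉ F k := fun k => hnext1 (F k)
  have hmem : ∀ k h, h ∈ F k ↔ ∃ i < k, g i = h := by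
    intro k
    induction k with
    | zero => simp [hF0]
    | succ k ih =>
      intro h
      rw [hFsucc, Finset.mem_insert]
      constructor
      · rintro (rfl | hh)
        · exact ⟨k, Nat.lt_succ_self k, rfl⟩
        · obtain ⟨i, hi, hgi⟩ := (ih h).1 hh
          exact ⟨i, (hi.trans (Nat.lt_succ_self k)), hgi⟩
      · rintro ⟨i, hi, rfl⟩
        rcases Nat.lt_succ_iff_lt_or_eq.1 hi with hi' | rfl
        · exact Or.inr ((ih _).2 ⟨i, hi', rfl⟩)
        · exact Or.inl rfl
  have hmono : ∀ k l : ℕ, k ≤ l → F k ⊆ F l := by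
    intro k l hkl h hh
    obtain ⟨i, hi, hgi⟩ := (hmem k h).1 hh
    exact (hmem l h).2 ⟨i, lt_of_lt_of_le hi hkl, hgi⟩
  have hginj : Function.Injective g := by
    intro k l hkl
    by_contra hne
    wlog hlt : k < l generalizing k l
    · exact this hkl.symm (Ne.symm hne) (by omega)
    · have : g k ∈ F l := (hmem l (g k)).2 ⟨k, hlt, rfl⟩
      rw [hkl] at this
      exact hgnot l this
  have hanti : ∀ k l : ℕ, k ≤ l → f (g l) ≤ f (g k) := by
    have hstep1 : ∀ k, f (g (k+1)) ≤ f (g k) := by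
      intro k
      apply hnext2 (F k)
      intro hmemk
      exact hgnot (k+1) (hmono k (k+1) (Nat.le_succ k) hmemk)
    exact fun k l hkl => antitone_nat_of_succ_le (f := fun k => f (g k)) hstep1 hkl
  have hsurj : Function.Surjective g := by
    intro h
    by_contra hns
    push_neg at hns
    have hnotF : ∀ k, h ∉ F k := by
      intro k hk
      obtain ⟨i, _, hgi⟩ := (hmem k h).1 hk
      exact hns i hgi
    have hle : ∀ k, f h ≤ f (g k) := fun k => hnext2 (F k) h (hnotF k)
    have hrange : Set.range g ⊆ {h' : ι | f h ≤ f h'} := by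
      rintro _ ⟨k, rfl⟩; exact hle k
    exact Set.infinite_range_of_injective hginj
      (Set.Finite.subset (hfin (f h) (hpos h)) hrange)
  exact ⟨g, ⟨hginj, hsurj⟩, hanti⟩

open Finset

/-- Factorization of a sum over `Fin s → ℤ` of a product of per-coordinate functions. -/
lemma stmt18_pi : ∀ (s : ℕ) (c : Fin s → ℤ → ℝ), (∀ j k, 0 ≤ c j k) → (∀ j, Summable (c j)) →
    Summable (fun h : Fin s → ℤ => ∏ j, c j (h j)) ∧
    (∑' h : Fin s → ℤ, ∏ j, c j (h j)) = ∏ j, ∑' k, c j k := by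
  intro s
  induction s with
  | zero =>
    intro c _ _
    constructor
    · apply summable_of_finite_support
      exact Set.toFinite _
    · rw [tsum_eq_single (default : Fin 0 → ℤ) (fun b hb => absurd (Subsingleton.elim b default) hb)]
      simp
  | succ s ih =>
    intro c hc hsum
    set e := Fin.consEquiv (fun _ : Fin (s+1) => ℤ) with he
    have hval : ∀ (x : ℤ) (y : Fin s → ℤ),
        (∏ j, c j (e (x, y) j)) = c 0 x * ∏ j : Fin s, c j.succ (y j) := by
      intro x y
      rw [Fin.prod_univ_succ]
      simp [he, Fin.consEquiv]
    obtain ⟨ihs, ihe⟩ := ih (fun j => c j.succ) (fun j k => hc j.succ k) (fun j => hsum j.succ)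
    have hnn1 : (0 : ℤ → ℝ) ≤ c 0 := fun x => hc 0 x
    have hnn2 : (0 : (Fin s → ℤ) → ℝ) ≤ fun y => ∏ j : Fin s, c j.succ (y j) :=
      fun y => Finset.prod_nonneg fun j _ => hc j.succ (y j)
    have hprodsum : Summable (fun p : ℤ × (Fin s → ℤ) => c 0 p.1 * ∏ j : Fin s, c j.succ (p.2 j)) := by
      apply Summable.mul_of_nonneg (hsum 0) ihs hnn1 hnn2
    have hsum2 : Summable (fun h : Fin (s+1) → ℤ => ∏ j, c j (h j)) := by
      rw [← e.summable_iff]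
      refine hprodsum.congr ?_
      rintro ⟨x, y⟩
      exact (hval x y).symm
    refine ⟨hsum2, ?_⟩
    have h1 : (∑' h : Fin (s+1) → ℤ, ∏ j, c j (h j))
        = ∑' p : ℤ × (Fin s → ℤ), c 0 p.1 * ∏ j : Fin s, c j.succ (p.2 j) := by
      rw [← e.tsum_eq (fun h => ∏ j, c j (h j))]
      exact tsum_congr fun p => hval p.1 p.2
    rw [h1, ← Summable.tsum_mul_tsum (hsum 0) ihs hprodsum, ihe, Fin.prod_univ_succ]

open Real

/-- Summability of `ω ^ (c ((k+1)^bq - 1))` for `ω ∈ (0,1)`, `c, bq > 0`. -/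
lemma stmt18_summD {ω : ℝ} (hω0 : 0 < ω) (hω1 : ω < 1) {c bq : ℝ} (hc : 0 < c) (hbq : 0 < bq) :
    Summable (fun k : ℕ => ω ^ (c * (((k : ℝ) + 1) ^ bq - 1))) := by
  set d : ℝ := c * (-Real.log ω) with hd
  have hlog : Real.log ω < 0 := Real.log_neg hω0 hω1
  have hd0 : 0 < d := by
    apply mul_pos hc; linarith
  set m : ℕ := ⌈2 / bq⌉₊ + 1 with hm
  have hm0 : (0:ℝ) < m := by positivity
  have hm2 : 2 ≤ (m : ℝ) * bq := by
    have h1 : 2 / bq ≤ (⌈2 / bq⌉₊ : ℝ) := Nat.le_ceil _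
    have h2 : (⌈2 / bq⌉₊ : ℝ) ≤ (m : ℝ) := by
      rw [hm]; push_cast; linarith
    have := (div_le_iff₀ hbq).1 (h1.trans h2)
    linarith
  -- pointwise bound
  have hbound : ∀ k : ℕ, ω ^ (c * (((k : ℝ) + 1) ^ bq - 1))
      ≤ (Real.exp d * ((m : ℝ) / d) ^ m) * ((k : ℝ) + 1) ^ (-(2:ℝ)) := by
    intro k
    set x : ℝ := (k : ℝ) + 1 with hx
    have hx1 : (1:ℝ) ≤ x := by
      have : (0:ℝ) ≤ (k:ℝ) := Nat.cast_nonneg k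
      rw [hx]; linarith
    have hx0 : (0:ℝ) < x := by positivity
    have hxb0 : (0:ℝ) ≤ x ^ bq := Real.rpow_nonneg hx0.le _
    -- rewrite as exp
    have h1 : ω ^ (c * (x ^ bq - 1)) = Real.exp d * Real.exp (-(d * x ^ bq)) := by
      rw [Real.rpow_def_of_pos hω0, ← Real.exp_add]
      congr 1
      rw [hd]; ring
    -- exp (d x^bq) ≥ (d/m)^m x^2
    have h2 : (d / m) ^ m * x ^ (2:ℝ) ≤ Real.exp (d * x ^ bq) := by
      have ht0 : 0 ≤ d * x ^ bq / m := by positivity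
      have e1 : Real.exp (d * x ^ bq) = Real.exp (d * x ^ bq / m) ^ m := by
        rw [← Real.exp_nat_mul]
        congr 1
        field_simp
      have e2 : (d * x ^ bq / m) ^ m ≤ Real.exp (d * x ^ bq / m) ^ m := by
        apply pow_le_pow_left₀ ht0
        linarith [Real.add_one_le_exp (d * x ^ bq / m)]
      have e3 : (d / m) ^ m * x ^ (2:ℝ) ≤ (d * x ^ bq / m) ^ m := by
        have : (d * x ^ bq / m) ^ m = (d / m) ^ m * (x ^ bq) ^ m := by
          rw [← mul_pow]; congr 1; ring
        rw [this]
        have : (x ^ bq) ^ m = x ^ (bq * m) := by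
          rw [← Real.rpow_natCast (x ^ bq) m, ← Real.rpow_mul hx0.le]
        rw [this]
        have hexp : (2:ℝ) ≤ bq * m := by linarith [hm2]
        have := Real.rpow_le_rpow_of_exponent_le hx1 hexp
        have hpos : (0:ℝ) ≤ (d / m) ^ m := by positivity
        nlinarith
      calc (d / m) ^ m * x ^ (2:ℝ) ≤ (d * x ^ bq / m) ^ m := e3
        _ ≤ _ := by rw [e1] at *; exact e2
    rw [h1]
    have hdm : (0:ℝ) < (d / m) ^ m := by positivity
    have hx2 : (0:ℝ) < x ^ (2:ℝ) := Real.rpow_pos_of_pos hx0 _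
    have h3 : Real.exp (-(d * x ^ bq)) ≤ ((m : ℝ) / d) ^ m * x ^ (-(2:ℝ)) := by
      rw [Real.exp_neg, Real.rpow_neg hx0.le]
      have hprod : (0:ℝ) < (d / m) ^ m * x ^ (2:ℝ) := by positivity
      have hinv := inv_anti₀ hprod h2
      refine hinv.trans_eq ?_
      rw [mul_inv, ← inv_pow, inv_div]
    calc Real.exp d * Real.exp (-(d * x ^ bq))
        ≤ Real.exp d * (((m : ℝ) / d) ^ m * x ^ (-(2:ℝ))) := by
          apply mul_le_mul_of_nonneg_left h3 (Real.exp_pos d).le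
      _ = (Real.exp d * ((m : ℝ) / d) ^ m) * x ^ (-(2:ℝ)) := by ring
  -- majorant summable
  have hmaj : Summable (fun k : ℕ => (Real.exp d * ((m : ℝ) / d) ^ m) * ((k : ℝ) + 1) ^ (-(2:ℝ))) := by
    apply Summable.mul_left
    have h := (summable_nat_add_iff 1).2 (summable_nat_rpow.2 (by norm_num : (-2:ℝ) < -1))
    refine h.congr fun k => ?_
    push_cast
    norm_num
  exact Summable.of_nonneg_of_le (fun k => Real.rpow_nonneg hω0.le _) hbound hmaj

/-- polynomial tail decay: for η ∈ (0,1) and every n ≥ 1 there is a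
set S ⊆ ℤ^s of at most n indices with
∑_{h ∈ ℤ^s ∖ S} ω_h ≤ (η/(1-η)) n^{-(1-η)/η} ∏_{j=1}^s (1 + 2 D_η ω^{η a_j})^{1/η},
where D_η = ∑_{h=1}^∞ ω^{η a_*(h^{b_*}-1)}. -/

theorem stmt18 (ω : ℝ) (hω : ω ∈ Set.Ioo (0:ℝ) 1) (s : ℕ) (hs : 1 ≤ s)
    (a b : Fin s → ℝ) (aStar bStar : ℝ) (haStar : 0 < aStar) (hbStar : 0 < bStar)
    (ha : ∀ j, aStar ≤ a j) (hb : ∀ j, bStar ≤ b j)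
    (η : ℝ) (hη : η ∈ Set.Ioo (0:ℝ) 1) :
    ∀ n : ℕ, 1 ≤ n → ∃ S : Finset (Fin s → ℤ), S.card ≤ n ∧
      ∑' h : {h : Fin s → ℤ // h ∉ S}, ω ^ (∑ j, a j * |(h.1 j : ℝ)| ^ (b j)) ≤
        (η / (1 - η)) * (n : ℝ) ^ (-(1 - η) / η) *
          ∏ j, (1 + 2 * (∑' k : ℕ, ω ^ (η * aStar * (((k : ℝ) + 1) ^ bStar - 1))) *
            ω ^ (η * a j)) ^ ((1 : ℝ) / η) := by
  obtain ⟨hω0, hω1⟩ := hω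
  obtain ⟨hη0, hη1⟩ := hη
  intro n hn
  classical
  -- basic definitions
  set E : (Fin s → ℤ) → ℝ := fun h => ∑ j, a j * |(h j : ℝ)| ^ (b j) with hE
  set f : (Fin s → ℤ) → ℝ := fun h => ω ^ (E h) with hf
  set μ : (Fin s → ℤ) → ℝ := fun h => ω ^ (η * E h) with hμ
  set D : ℝ := ∑' k : ℕ, ω ^ (η * aStar * (((k : ℝ) + 1) ^ bStar - 1)) with hD
  set c : Fin s → ℤ → ℝ := fun j k => ω ^ (η * (a j * |(k : ℝ)| ^ (b j))) with hc
  have hE0 : ∀ h, 0 ≤ E h := by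
    intro h
    apply Finset.sum_nonneg
    intro j _
    have := haStar.trans_le (ha j)
    positivity
  -- ω ^ sum = prod of ω ^
  have hωsum : ∀ t : Fin s → ℝ, ω ^ (∑ j, t j) = ∏ j, ω ^ (t j) := by
    intro t
    rw [Real.rpow_def_of_pos hω0, Finset.mul_sum, Real.exp_sum]
    exact Finset.prod_congr rfl fun j _ => (Real.rpow_def_of_pos hω0 _).symm
  have hμfact : ∀ h, μ h = ∏ j, c j (h j) := by
    intro h
    rw [hμ]
    simp only [hE, Finset.mul_sum]
    exact hωsum _
  -- summability of D series
  have hηaS : 0 < η * aStar := mul_pos hη0 haStar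
  have hDsum : Summable (fun k : ℕ => ω ^ (η * aStar * (((k : ℝ) + 1) ^ bStar - 1))) :=
    stmt18_summD hω0 hω1 hηaS hbStar
  have hD0 : 0 ≤ D := tsum_nonneg fun k => Real.rpow_nonneg hω0.le _
  -- key exponent inequality
  have hkey : ∀ (j : Fin s) (x : ℝ), 1 ≤ x →
      ω ^ (η * (a j * x ^ (b j))) ≤ ω ^ (η * a j) * ω ^ (η * aStar * (x ^ bStar - 1)) := by
    intro j x hx
    rw [← Real.rpow_add hω0]
    apply Real.rpow_le_rpow_of_exponent_ge hω0 hω1.le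
    have hx0 : (0:ℝ) < x := lt_of_lt_of_le one_pos hx
    have hxb : x ^ bStar ≤ x ^ (b j) := Real.rpow_le_rpow_of_exponent_le hx (hb j)
    have hxb1 : 1 ≤ x ^ bStar := by
      calc (1:ℝ) = x ^ (0:ℝ) := (Real.rpow_zero x).symm
        _ ≤ x ^ bStar := Real.rpow_le_rpow_of_exponent_le hx hbStar.le
    have haj : aStar ≤ a j := ha j
    have h1 : a j * x ^ bStar ≤ a j * x ^ (b j) :=
      mul_le_mul_of_nonneg_left hxb (le_trans haStar.le haj)
    have h3 : a j + aStar * (x ^ bStar - 1) ≤ a j * x ^ (b j) := by nlinarith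
    nlinarith [mul_le_mul_of_nonneg_left h3 hη0.le]
  -- per-coordinate facts
  have hcnn : ∀ j k, 0 ≤ c j k := fun j k => Real.rpow_nonneg hω0.le _
  have hcastabs : ∀ k : ℕ, |(((k:ℤ)+1 : ℤ) : ℝ)| = (k : ℝ) + 1 := by
    intro k
    push_cast
    rw [abs_of_nonneg (by positivity)]
  have hcsucc_le : ∀ (j : Fin s) (k : ℕ),
      c j ((k : ℤ) + 1) ≤ ω ^ (η * a j) * ω ^ (η * aStar * (((k:ℝ) + 1) ^ bStar - 1)) := by
    intro j k
    have h1 : ((1:ℝ) ≤ (k:ℝ) + 1) := by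
      linarith [show (0:ℝ) ≤ (k:ℝ) from Nat.cast_nonneg k]
    have h2 := hkey j ((k:ℝ)+1) h1
    simp only [hc]
    rw [hcastabs k]
    exact h2
  have hcsuccsum : ∀ j : Fin s, Summable (fun k : ℕ => c j ((k : ℤ) + 1)) := by
    intro j
    exact Summable.of_nonneg_of_le (fun k => hcnn j _) (hcsucc_le j) (hDsum.mul_left _)
  have hcnatsum : ∀ j : Fin s, Summable (fun k : ℕ => c j (k : ℤ)) := by
    intro j
    apply (summable_nat_add_iff 1).1
    refine (hcsuccsum j).congr fun k => ?_
    exact congrArg (c j) (by push_cast; ring)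
  have hcnegeq : ∀ (j : Fin s) (k : ℕ), c j (-((k : ℤ) + 1)) = c j ((k : ℤ) + 1) := by
    intro j k
    rw [hc]
    simp only
    congr 2
    push_cast
    rw [abs_neg]
  have hcnegsum : ∀ j : Fin s, Summable (fun k : ℕ => c j (-((k : ℤ) + 1))) := by
    intro j
    exact (hcsuccsum j).congr fun k => (hcnegeq j k).symm
  have hcsum : ∀ j : Fin s, Summable (c j) := fun j =>
    Summable.of_nat_of_neg_add_one (hcnatsum j) (hcnegsum j)
  have hctail : ∀ j : Fin s, ∑' k : ℕ, c j ((k:ℤ)+1) ≤ ω ^ (η * a j) * D := by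
    intro j
    calc ∑' k : ℕ, c j ((k:ℤ)+1)
        ≤ ∑' k : ℕ, ω ^ (η * a j) * ω ^ (η * aStar * (((k:ℝ) + 1) ^ bStar - 1)) :=
          Summable.tsum_le_tsum (hcsucc_le j) (hcsuccsum j) (hDsum.mul_left _)
      _ = ω ^ (η * a j) * D := by rw [tsum_mul_left, hD]
  have hczero : ∀ j : Fin s, c j 0 = 1 := by
    intro j
    rw [hc]
    simp only [Int.cast_zero, abs_zero]
    rw [Real.zero_rpow (ne_of_gt (lt_of_lt_of_le hbStar (hb j))), mul_zero, mul_zero,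
      Real.rpow_zero]
  have hcT : ∀ j : Fin s, ∑' k : ℤ, c j k ≤ 1 + 2 * D * ω ^ (η * a j) := by
    intro j
    rw [tsum_of_nat_of_neg_add_one (hcnatsum j) (hcnegsum j)]
    have e1 : ∑' k : ℕ, c j (k : ℤ) = c j 0 + ∑' k : ℕ, c j ((k:ℤ)+1) := by
      rw [Summable.tsum_eq_zero_add (hcnatsum j)]
      simp only [Nat.cast_zero]
      congr 1
    have e2 : ∑' k : ℕ, c j (-((k:ℤ)+1)) = ∑' k : ℕ, c j ((k:ℤ)+1) :=
      tsum_congr fun k => hcnegeq j k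
    rw [e1, e2, hczero j]
    have := hctail j
    nlinarith [this]
  -- factorize μ
  obtain ⟨hμs0, hμt⟩ := stmt18_pi s c hcnn hcsum
  have hμs : Summable μ := hμs0.congr fun h => (hμfact h).symm
  set M : ℝ := ∑' h : Fin s → ℤ, μ h with hM
  have hM0 : 0 ≤ M := tsum_nonneg fun h => Real.rpow_nonneg hω0.le _
  set P : ℝ := ∏ j, (1 + 2 * D * ω ^ (η * a j)) with hP
  have hMP : M ≤ P := by
    have e : M = ∑' h : Fin s → ℤ, ∏ j, c j (h j) := tsum_congr fun h => hμfact h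
    rw [e, hμt, hP]
    apply Finset.prod_le_prod
    · intro j _
      exact tsum_nonneg fun k => hcnn j k
    · intro j _
      exact hcT j
  have hP1 : ∀ j : Fin s, (0:ℝ) ≤ 1 + 2 * D * ω ^ (η * a j) := by
    intro j
    have := Real.rpow_nonneg hω0.le (η * a j)
    nlinarith [hD0]
  -- facts about f
  have hfpos : ∀ h, 0 < f h := fun h => Real.rpow_pos_of_pos hω0 _
  have hfμ : ∀ h, f h ≤ μ h := by
    intro h
    apply Real.rpow_le_rpow_of_exponent_ge hω0 hω1.le
    nlinarith [hE0 h]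
  have hfs : Summable f := hμs.of_nonneg_of_le (fun h => (hfpos h).le) hfμ
  have hfin : ∀ t : ℝ, 0 < t → {h : Fin s → ℤ | t ≤ f h}.Finite := by
    intro t ht
    have h1 : ∀ᶠ h in Filter.cofinite, f h < t :=
      hfs.tendsto_cofinite_zero.eventually_lt_const ht
    have h2 := Filter.eventually_cofinite.1 h1
    refine h2.subset fun h hh => ?_
    simp only [Set.mem_setOf_eq] at hh ⊢
    linarith
  haveI : Nonempty (Fin s) := ⟨⟨0, hs⟩⟩
  obtain ⟨g, ⟨hginj, hgsurj⟩, hganti⟩ := stmt18_greedy f hfpos hfin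
  -- the set S
  refine ⟨(Finset.range n).image g, le_trans (Finset.card_image_le) (by simp), ?_⟩
  set S : Finset (Fin s → ℤ) := (Finset.range n).image g with hS
  have hmemS : ∀ h, h ∈ S ↔ ∃ i, i < n ∧ g i = h := by
    intro h
    rw [hS]
    simp [Finset.mem_image]
  -- antitonicity of E and μ along g
  have hEanti : ∀ k l : ℕ, k ≤ l → E (g k) ≤ E (g l) := fun k l hkl =>
    (Real.rpow_le_rpow_left_iff_of_base_lt_one hω0 hω1).1 (hganti k l hkl)
  have hμanti : ∀ k l : ℕ, k ≤ l → μ (g l) ≤ μ (g k) := fun k l hkl =>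
    Real.rpow_le_rpow_of_exponent_ge hω0 hω1.le
      (mul_le_mul_of_nonneg_left (hEanti k l hkl) hη0.le)
  -- the per-index eigenvalue bound
  have hμk : ∀ k : ℕ, ((k:ℝ) + 1) * μ (g k) ≤ M := by
    intro k
    have h1 : (Finset.range (k+1)).card • μ (g k) ≤ ∑ i ∈ Finset.range (k+1), μ (g i) :=
      Finset.card_nsmul_le_sum _ _ _
        (fun i hi => hμanti i k (by simp only [Finset.mem_range] at hi; omega))
    have h2 : ∑ i ∈ Finset.range (k+1), μ (g i)
        = ∑ h ∈ (Finset.range (k+1)).image g, μ h :=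
      (Finset.sum_image (fun x _ y _ hxy => hginj hxy)).symm
    have h3 : ∑ h ∈ (Finset.range (k+1)).image g, μ h ≤ M :=
      Summable.sum_le_tsum _ (fun h _ => Real.rpow_nonneg hω0.le _) hμs
    rw [Finset.card_range] at h1
    have h4 : ((k:ℝ)+1) * μ (g k) = (k+1) • μ (g k) := by
      rw [nsmul_eq_mul]; push_cast; ring
    rw [h4]
    linarith
  have hfk : ∀ k : ℕ, f (g k) ≤ M ^ ((1:ℝ)/η) * (((k:ℝ)+1)) ^ (-((1:ℝ)/η)) := by
    intro k
    have hk1 : (0:ℝ) < (k:ℝ)+1 := by positivity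
    have hμle : μ (g k) ≤ M / ((k:ℝ)+1) := by
      rw [le_div_iff₀ hk1]; linarith [hμk k]
    have hfeq : f (g k) = (μ (g k)) ^ ((1:ℝ)/η) := by
      simp only [hμ, hf]
      rw [← Real.rpow_mul hω0.le]
      congr 1
      field_simp
    rw [hfeq]
    calc (μ (g k)) ^ ((1:ℝ)/η) ≤ (M / ((k:ℝ)+1)) ^ ((1:ℝ)/η) :=
        Real.rpow_le_rpow (Real.rpow_nonneg hω0.le _) hμle (by positivity)
      _ = M ^ ((1:ℝ)/η) * (((k:ℝ)+1)) ^ (-((1:ℝ)/η)) := by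
        rw [Real.div_rpow hM0 hk1.le, Real.rpow_neg hk1.le, div_eq_mul_inv]
  -- the equivalence between ℕ and the complement of S
  have hgS : ∀ j : ℕ, g (n + j) ∉ S := by
    intro j hj
    obtain ⟨i, hi, hgi⟩ := (hmemS _).1 hj
    have := hginj hgi
    omega
  have hbij : Function.Bijective
      (fun j : ℕ => (⟨g (n + j), hgS j⟩ : {h : Fin s → ℤ // h ∉ S})) := by
    constructor
    · intro j1 j2 hj
      have h1 : g (n + j1) = g (n + j2) := congrArg Subtype.val hj
      have := hginj h1
      omega
    · rintro ⟨h, hh⟩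
      obtain ⟨k, rfl⟩ := hgsurj h
      have hk : n ≤ k := by
        by_contra hk
        exact hh ((hmemS _).2 ⟨k, by omega, rfl⟩)
      exact ⟨k - n, Subtype.ext (congrArg g (by omega))⟩
  set e : ℕ ≃ {h : Fin s → ℤ // h ∉ S} := Equiv.ofBijective _ hbij with he
  -- tail comparison
  set p : ℝ := (1:ℝ)/η with hp'
  have hp : 1 < p := by
    rw [hp', lt_div_iff₀ hη0]; linarith
  obtain ⟨htsumm, htbound⟩ := stmt18_tail hp n hn
  have hfk' : ∀ j : ℕ, f (g (n+j)) ≤ M ^ p * (((n:ℝ)+j+1)) ^ (-p) := by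
    intro j
    have h1 := hfk (n+j)
    have h2 : (((n+j:ℕ)):ℝ) + 1 = (n:ℝ)+j+1 := by push_cast; ring
    rw [h2] at h1
    exact h1
  have hmaj : Summable (fun j : ℕ => M ^ p * (((n:ℝ)+j+1)) ^ (-p)) := htsumm.mul_left _
  have hsum1 : Summable (fun j : ℕ => f (g (n+j))) :=
    Summable.of_nonneg_of_le (fun j => (hfpos _).le) hfk' hmaj
  have h5 : ∑' (h : {h : Fin s → ℤ // h ∉ S}),
      ω ^ (∑ j, a j * |(h.1 j : ℝ)| ^ (b j)) = ∑' j : ℕ, f (g (n + j)) :=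
    (Equiv.tsum_eq e (fun h : {h : Fin s → ℤ // h ∉ S} => f h.1)).symm
  rw [h5]
  have hMη : (0:ℝ) ≤ M ^ p := Real.rpow_nonneg hM0 _
  have hnp : (0:ℝ) ≤ (n:ℝ) ^ ((1:ℝ) - p) / (p - 1) := by
    apply div_nonneg (Real.rpow_nonneg (Nat.cast_nonneg n) _)
    linarith
  have hPη : M ^ p ≤ P ^ p := Real.rpow_le_rpow hM0 hMP (by positivity)
  have halg : P ^ p * ((n:ℝ) ^ ((1:ℝ) - p) / (p - 1))
      = (η / (1 - η)) * (n : ℝ) ^ (-(1 - η) / η) * P ^ p := by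
    have he1 : (1:ℝ) - p = -(1 - η) / η := by
      rw [hp']; field_simp; ring
    have he2 : p - 1 = (1 - η)/η := by
      rw [hp']; field_simp
    have hη2 : (1:ℝ) - η ≠ 0 := by linarith
    rw [he1, he2]
    field_simp
  have hprRW : P ^ p = ∏ j, (1 + 2 * D * ω ^ (η * a j)) ^ p := by
    rw [hP, ← Real.finset_prod_rpow _ _ (fun j _ => hP1 j) p]
  calc ∑' j : ℕ, f (g (n + j))
      ≤ ∑' j : ℕ, M ^ p * (((n:ℝ)+j+1)) ^ (-p) := Summable.tsum_le_tsum hfk' hsum1 hmaj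
    _ = M ^ p * ∑' j : ℕ, (((n:ℝ)+j+1)) ^ (-p) := tsum_mul_left
    _ ≤ M ^ p * ((n:ℝ) ^ ((1:ℝ) - p) / (p - 1)) := by
        apply mul_le_mul_of_nonneg_left htbound hMη
    _ ≤ P ^ p * ((n:ℝ) ^ ((1:ℝ) - p) / (p - 1)) := mul_le_mul_of_nonneg_right hPη hnp
    _ = (η / (1 - η)) * (n : ℝ) ^ (-(1 - η) / η) * P ^ p := halg
    _ = (η / (1 - η)) * (n : ℝ) ^ (-(1 - η) / η)
        * ∏ j, (1 + 2 * D * ω ^ (η * a j)) ^ p := by rw [hprRW]
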